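/- With 0 < a < 1/2 and a < b < 1-a and lambda_pm = (sqrt(b(1-a)) +/ - sqrt(a(1-b)))^2, the integral over [lambda_-, lambda_+] of sqrt((lambda_+ - x)(x - lambda_-)) / (x(1-x)) dx equals pi (1 - sqrt(lambda_- lambda_+) - sqrt((1-lambda_-)(1-lambda_+))) = 2 pi a. In particular, the measure with density sqrt((lambda_+ - x)(x - lambda_-)) / (2 pi a x (1-x)) on [lambda_-, lambda_+] is a probability measure. -/

import Mathlib

open Real intervalIntegral

lemma pos_ABsin {A B : ℝ} (hB : |B| < A) (θ : ℝ) : 0 < A + B * Real.sin θ := by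
  nlinarith [Real.neg_one_le_sin θ, Real.sin_le_one θ, neg_abs_le B, le_abs_self B]

lemma intJ {A B : ℝ} (hB : |B| < A) :
    ∫ θ in (-(π/2))..(π/2), (A + B * Real.sin θ)⁻¹ = π / Real.sqrt (A^2 - B^2) := by
  have hA : 0 < A := lt_of_le_of_lt (abs_nonneg B) hB
  have hc2 : 0 < A^2 - B^2 := by nlinarith [abs_nonneg B, sq_abs B]
  set c := Real.sqrt (A^2 - B^2) with hc_def
  have hc : 0 < c := Real.sqrt_pos.mpr hc2
  have hcsq : c^2 = A^2 - B^2 := Real.sq_sqrt hc2.le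
  set F : ℝ → ℝ := fun θ => (2/c) * Real.arctan ((A * Real.tan (θ/2) + B)/c) with hF
  have hderiv : ∀ θ ∈ Set.uIcc (-(π/2)) (π/2),
      HasDerivAt F ((A + B * Real.sin θ)⁻¹) θ := by
    intro θ hθ
    rw [Set.uIcc_of_le (by linarith [pi_pos] : -(π/2) ≤ π/2)] at hθ
    have hθ2 : θ/2 ∈ Set.Ioo (-(π/2)) (π/2) := by
      constructor <;> [linarith [hθ.1, pi_pos]; linarith [hθ.2, pi_pos]]
    have hco : 0 < Real.cos (θ/2) := Real.cos_pos_of_mem_Ioo hθ2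
    -- derivative of θ ↦ tan(θ/2)
    have h1 : HasDerivAt (fun θ : ℝ => Real.tan (θ/2)) ((1 / Real.cos (θ/2)^2) * (1/2)) θ := by
      have := (Real.hasDerivAt_tan hco.ne').comp θ ((hasDerivAt_id θ).div_const 2)
      exact this
    have h2 : HasDerivAt (fun θ : ℝ => (A * Real.tan (θ/2) + B)/c)
        ((A * ((1 / Real.cos (θ/2)^2) * (1/2)))/c) θ := ((h1.const_mul A).add_const B).div_const c
    have h3 := ((Real.hasDerivAt_arctan _).comp θ h2).const_mul (2/c)
    refine HasDerivAt.congr_deriv h3 ?_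
    symm
    have hsin : Real.sin θ = 2 * Real.sin (θ/2) * Real.cos (θ/2) := by
      rw [← Real.sin_two_mul]; ring_nf
    have hpyth : Real.sin (θ/2)^2 + Real.cos (θ/2)^2 = 1 := Real.sin_sq_add_cos_sq _
    have hpos := pos_ABsin hB θ
    rw [Real.tan_eq_sin_div_cos, hsin]
    field_simp
    rw [div_eq_iff (show A + B * 2 * Real.sin (θ/2) * Real.cos (θ/2) ≠ 0 by
      rw [hsin] at hpos; intro h; linarith)]
    linear_combination (Real.cos (θ/2)^2) * hcsq + (A^2) * hpyth
  have hint : IntervalIntegrable (fun θ => (A + B * Real.sin θ)⁻¹) MeasureTheory.volume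
      (-(π/2)) (π/2) := by
    apply Continuous.intervalIntegrable
    exact (continuous_const.add (continuous_const.mul Real.continuous_sin)).inv₀
      fun θ => (pos_ABsin hB θ).ne'
  rw [intervalIntegral.integral_eq_sub_of_hasDerivAt hderiv hint]
  have ht1 : Real.tan (π/2/2) = 1 := by rw [show π/2/2 = π/4 by ring, Real.tan_pi_div_four]
  have ht2 : Real.tan (-(π/2)/2) = -1 := by
    rw [show -(π/2)/2 = -(π/4) by ring, Real.tan_neg, Real.tan_pi_div_four]
  have hAB : 0 < A + B := by nlinarith [neg_abs_le B]
  have hAB' : 0 < A - B := by nlinarith [le_abs_self B]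
  have hrecip : (A * -1 + B)/c = -(((A + B)/c)⁻¹) := by
    rw [inv_div]
    field_simp
    linear_combination hcsq
  simp only [hF, ht1, ht2, hrecip, Real.arctan_neg]
  rw [Real.arctan_inv_of_pos (by positivity : (0:ℝ) < (A+B)/c)]
  field_simp
  ring

open Real intervalIntegral

lemma intL {A B : ℝ} (hB : |B| < A) (hB0 : B ≠ 0)
    (hJ : ∫ θ in (-(π/2))..(π/2), (A + B * Real.sin θ)⁻¹ = π / Real.sqrt (A^2 - B^2))
    (hpos : ∀ θ, 0 < A + B * Real.sin θ) :
    ∫ θ in (-(π/2))..(π/2), Real.cos θ^2 / (A + B * Real.sin θ)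
      = π * (A - Real.sqrt (A^2 - B^2)) / B^2 := by
  have hA : 0 < A := lt_of_le_of_lt (abs_nonneg B) hB
  have hc2 : 0 < A^2 - B^2 := by nlinarith [abs_nonneg B, sq_abs B]
  have key : ∀ θ : ℝ, Real.cos θ^2 / (A + B * Real.sin θ)
      = (1 - A^2/B^2) * (A + B * Real.sin θ)⁻¹ + (A - B * Real.sin θ)/B^2 := by
    intro θ
    have h := (hpos θ).ne'
    have hpy : Real.sin θ^2 + Real.cos θ^2 = 1 := Real.sin_sq_add_cos_sq θ
    field_simp
    linear_combination B^2 * hpy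
  simp_rw [key]
  have hi1 : IntervalIntegrable (fun θ => (A + B * Real.sin θ)⁻¹) MeasureTheory.volume
      (-(π/2)) (π/2) := by
    apply Continuous.intervalIntegrable
    exact (continuous_const.add (continuous_const.mul Real.continuous_sin)).inv₀
      fun θ => (hpos θ).ne'
  rw [intervalIntegral.integral_add (f := fun θ => (1 - A^2/B^2) * (A + B * Real.sin θ)⁻¹)
    (g := fun θ => (A - B * Real.sin θ)/B^2) ((hi1.const_mul _))
    (((continuous_const.sub (continuous_const.mul Real.continuous_sin)).div_const _).intervalIntegrable _ _),
    intervalIntegral.integral_const_mul, hJ]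
  have h2 : (∫ θ in (-(π/2))..(π/2), (A - B * Real.sin θ)/B^2) = π * A / B^2 := by
    simp_rw [sub_div, mul_div_assoc]
    rw [intervalIntegral.integral_sub (intervalIntegrable_const)
      (((Real.continuous_sin.div_const _).intervalIntegrable _ _).const_mul _),
      intervalIntegral.integral_const_mul]
    simp_rw [div_eq_mul_inv (Real.sin _)]
    rw [intervalIntegral.integral_mul_const, integral_sin]
    simp [Real.cos_pi_div_two]
    ring
  rw [h2]
  have hc : 0 < Real.sqrt (A^2 - B^2) := Real.sqrt_pos.mpr hc2
  have hcsq : Real.sqrt (A^2 - B^2)^2 = A^2 - B^2 := Real.sq_sqrt hc2.le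
  have hB2 : B^2 ≠ 0 := pow_ne_zero 2 hB0
  field_simp
  linear_combination hcsq


lemma split_frac (R x y : ℝ) (hx : x ≠ 0) (hy : y ≠ 0) (h : x + y = 1) :
    R / (x * y) = R / x + R / y := by
  rw [div_add_div _ _ hx hy]
  congr 1
  linear_combination (-R) * h

lemma keyIntegral {p q : ℝ} (hp : 0 < p) (hpq : p < q) (hq : q < 1) :
    ∫ x in p..q, Real.sqrt ((q - x) * (x - p)) / (x * (1 - x))
      = π * (1 - Real.sqrt (p*q) - Real.sqrt ((1-p)*(1-q))) := by
  obtain ⟨m, hm⟩ : ∃ m : ℝ, m = (p+q)/2 := ⟨_, rfl⟩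
  obtain ⟨r, hr⟩ : ∃ r : ℝ, r = (q-p)/2 := ⟨_, rfl⟩
  have hr0 : 0 < r := by rw [hr]; linarith
  have hrm : r < m := by rw [hr, hm]; linarith
  have hrm' : r < 1 - m := by rw [hr, hm]; linarith
  have hpos1 : ∀ θ : ℝ, 0 < m + r * Real.sin θ := fun θ => by
    nlinarith [Real.neg_one_le_sin θ, Real.sin_le_one θ]
  have hpos2 : ∀ θ : ℝ, 0 < (1-m) + (-r) * Real.sin θ := fun θ => by
    nlinarith [Real.neg_one_le_sin θ, Real.sin_le_one θ]
  have hmem : ∀ x ∈ Set.Icc p q, x * (1 - x) ≠ 0 := by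
    intro x hx
    have h1 : 0 < x := lt_of_lt_of_le hp hx.1
    have h2 : 0 < 1 - x := by have := lt_of_le_of_lt hx.2 hq; linarith
    exact (mul_pos h1 h2).ne'
  have hgc : ContinuousOn (fun x => Real.sqrt ((q - x) * (x - p)) / (x * (1 - x)))
      (Set.Icc p q) := by
    apply ContinuousOn.div
    · exact (Real.continuous_sqrt.comp
        (((continuous_const.sub continuous_id).mul (continuous_id.sub continuous_const)))).continuousOn
    · exact (continuous_id.mul (continuous_const.sub continuous_id)).continuousOn
    · exact hmem
  have himg : (fun θ => m + r * Real.sin θ) '' Set.uIcc (-(π/2)) (π/2) ⊆ Set.Icc p q := by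
    rintro _ ⟨θ, _, rfl⟩
    constructor
    · have := Real.neg_one_le_sin θ
      rw [hm, hr] at *; nlinarith
    · have := Real.sin_le_one θ
      rw [hm, hr] at *; nlinarith
  have hsub : (∫ θ in (-(π/2))..(π/2),
        (r * Real.cos θ) • (Real.sqrt ((q - (m + r * Real.sin θ)) * ((m + r * Real.sin θ) - p))
          / ((m + r * Real.sin θ) * (1 - (m + r * Real.sin θ)))))
      = ∫ x in p..q, Real.sqrt ((q - x) * (x - p)) / (x * (1 - x)) := by
    have h1 : ∀ θ ∈ Set.uIcc (-(π/2)) (π/2),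
        HasDerivAt (fun θ => m + r * Real.sin θ) (r * Real.cos θ) θ := by
      intro θ _
      simpa using ((Real.hasDerivAt_sin θ).const_mul r).const_add m
    have h2 : ContinuousOn (fun θ => r * Real.cos θ) (Set.uIcc (-(π/2)) (π/2)) :=
      (continuous_const.mul Real.continuous_cos).continuousOn
    have h3 := intervalIntegral.integral_comp_smul_deriv' h1 h2 (hgc.mono himg)
    simp only [Function.comp] at h3
    rw [h3]
    congr 1
    · rw [Real.sin_neg, Real.sin_pi_div_two, hm, hr]; ring
    · rw [Real.sin_pi_div_two, hm, hr]; ring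
  rw [← hsub]
  have hcongr : ∀ θ ∈ Set.uIcc (-(π/2)) (π/2),
      (r * Real.cos θ) • (Real.sqrt ((q - (m + r * Real.sin θ)) * ((m + r * Real.sin θ) - p))
          / ((m + r * Real.sin θ) * (1 - (m + r * Real.sin θ))))
        = r^2 * (Real.cos θ^2 / (m + r * Real.sin θ))
          + r^2 * (Real.cos θ^2 / ((1-m) + (-r) * Real.sin θ)) := by
    intro θ hθ
    rw [Set.uIcc_of_le (by linarith [pi_pos] : -(π/2) ≤ π/2)] at hθ
    have hcos : 0 ≤ Real.cos θ := Real.cos_nonneg_of_mem_Icc ⟨hθ.1, hθ.2⟩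
    have hpy : Real.sin θ^2 + Real.cos θ^2 = 1 := Real.sin_sq_add_cos_sq θ
    have hs : Real.sqrt ((q - (m + r * Real.sin θ)) * ((m + r * Real.sin θ) - p))
        = r * Real.cos θ := by
      have h5 : (q - (m + r * Real.sin θ)) * ((m + r * Real.sin θ) - p)
          = (r * Real.cos θ)^2 := by
        rw [hm, hr]; linear_combination (-(((q-p)/2)^2)) * hpy
      rw [h5, Real.sqrt_sq (by positivity)]
    have hx1 : (m + r * Real.sin θ) ≠ 0 := (hpos1 θ).ne'
    have hx2 : (1 - (m + r * Real.sin θ)) ≠ 0 := by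
      have := hpos2 θ; intro h; rw [show (1:ℝ) - (m + r*Real.sin θ)
        = (1-m) + (-r)*Real.sin θ by ring] at h; linarith
    rw [hs, smul_eq_mul, show r * Real.cos θ * (r * Real.cos θ
        / ((m + r * Real.sin θ) * (1 - (m + r * Real.sin θ))))
      = (r^2 * Real.cos θ^2) / ((m + r * Real.sin θ) * (1 - (m + r * Real.sin θ))) by ring,
      split_frac _ _ _ hx1 hx2 (by ring)]
    rw [show (1:ℝ) - (m + r*Real.sin θ) = (1-m) + (-r)*Real.sin θ by ring]
    ring
  rw [intervalIntegral.integral_congr hcongr]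
  have hJ1 := @intJ m r (by rwa [abs_of_pos hr0])
  have hJ2 := @intJ (1-m) (-r) (by rwa [abs_neg, abs_of_pos hr0])
  have hL1 := intL (by rwa [abs_of_pos hr0]) hr0.ne' hJ1 hpos1
  have hL2 := intL (A := 1-m) (B := -r) (by rwa [abs_neg, abs_of_pos hr0])
    (neg_ne_zero.mpr hr0.ne') hJ2 hpos2
  have hi1 : IntervalIntegrable (fun θ => Real.cos θ^2 / (m + r * Real.sin θ))
      MeasureTheory.volume (-(π/2)) (π/2) := by
    apply Continuous.intervalIntegrable
    exact (Real.continuous_cos.pow 2).div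
      (continuous_const.add (continuous_const.mul Real.continuous_sin)) fun θ => (hpos1 θ).ne'
  have hi2 : IntervalIntegrable (fun θ => Real.cos θ^2 / ((1-m) + (-r) * Real.sin θ))
      MeasureTheory.volume (-(π/2)) (π/2) := by
    apply Continuous.intervalIntegrable
    exact (Real.continuous_cos.pow 2).div
      (continuous_const.add (continuous_const.mul Real.continuous_sin)) fun θ => (hpos2 θ).ne'
  rw [intervalIntegral.integral_add (hi1.const_mul _) (hi2.const_mul _),
    intervalIntegral.integral_const_mul, intervalIntegral.integral_const_mul, hL1, hL2]
  have e1 : m^2 - r^2 = p*q := by rw [hm, hr]; ring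
  have e2 : (1-m)^2 - (-r)^2 = (1-p)*(1-q) := by rw [hm, hr]; ring
  rw [e1, e2]
  have hrr : r^2 ≠ 0 := by positivity
  rw [show ((-r):ℝ)^2 = r^2 by ring]
  field_simp
  rw [hm]
  ring

theorem jacobi_density_normalization (a b : ℝ) (ha : 0 < a) (ha' : a < 1 / 2)
    (hab : a < b) (hab' : b < 1 - a) :
    (∫ x in ((Real.sqrt (b * (1 - a)) - Real.sqrt (a * (1 - b))) ^ 2)..
        ((Real.sqrt (b * (1 - a)) + Real.sqrt (a * (1 - b))) ^ 2),
        Real.sqrt (((Real.sqrt (b * (1 - a)) + Real.sqrt (a * (1 - b))) ^ 2 - x) *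
            (x - (Real.sqrt (b * (1 - a)) - Real.sqrt (a * (1 - b))) ^ 2)) / (x * (1 - x)))
      = Real.pi * (1 -
          Real.sqrt ((Real.sqrt (b * (1 - a)) - Real.sqrt (a * (1 - b))) ^ 2 *
            (Real.sqrt (b * (1 - a)) + Real.sqrt (a * (1 - b))) ^ 2) -
          Real.sqrt ((1 - (Real.sqrt (b * (1 - a)) - Real.sqrt (a * (1 - b))) ^ 2) *
            (1 - (Real.sqrt (b * (1 - a)) + Real.sqrt (a * (1 - b))) ^ 2))) ∧
    (∫ x in ((Real.sqrt (b * (1 - a)) - Real.sqrt (a * (1 - b))) ^ 2)..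
        ((Real.sqrt (b * (1 - a)) + Real.sqrt (a * (1 - b))) ^ 2),
        Real.sqrt (((Real.sqrt (b * (1 - a)) + Real.sqrt (a * (1 - b))) ^ 2 - x) *
            (x - (Real.sqrt (b * (1 - a)) - Real.sqrt (a * (1 - b))) ^ 2)) / (x * (1 - x)))
      = 2 * Real.pi * a ∧
    (∫ x in ((Real.sqrt (b * (1 - a)) - Real.sqrt (a * (1 - b))) ^ 2)..
        ((Real.sqrt (b * (1 - a)) + Real.sqrt (a * (1 - b))) ^ 2),
        Real.sqrt (((Real.sqrt (b * (1 - a)) + Real.sqrt (a * (1 - b))) ^ 2 - x) *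
            (x - (Real.sqrt (b * (1 - a)) - Real.sqrt (a * (1 - b))) ^ 2)) /
          (2 * Real.pi * a * x * (1 - x)))
      = 1 := by
  have hb0 : 0 < b := lt_trans ha hab
  have h1a : 0 < 1 - a := by linarith
  have h1b : 0 < 1 - b := by linarith
  set X := Real.sqrt (b * (1 - a)) with hX
  set Y := Real.sqrt (a * (1 - b)) with hY
  have hX2 : X ^ 2 = b * (1 - a) := Real.sq_sqrt (by positivity)
  have hY2 : Y ^ 2 = a * (1 - b) := Real.sq_sqrt (by positivity)
  have hY0 : 0 < Y := Real.sqrt_pos.mpr (by positivity)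
  have hXY : Y < X := by
    apply Real.sqrt_lt_sqrt (by positivity)
    nlinarith
  have hp : 0 < (X - Y) ^ 2 := pow_pos (by linarith) 2
  have hpq : (X - Y) ^ 2 < (X + Y) ^ 2 := by nlinarith
  have hZsq : (X * Y) ^ 2 = b * (1 - a) * (a * (1 - b)) := by
    rw [mul_pow, hX2, hY2]
  have hZ0 : 0 ≤ X * Y := by positivity
  have hab1 : a + b < 1 := by linarith
  have hS0 : 0 < a * b + (1 - a) * (1 - b) := by positivity
  have hSP : (a * b + (1 - a) * (1 - b)) ^ 2 - 4 * ((X * Y) ^ 2) = (a + b - 1) ^ 2 := by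
    linear_combination -4 * hZsq
  have h9 : 0 < (a + b - 1) ^ 2 :=
    pow_pos (by linarith : (0:ℝ) < -(a + b - 1)) 2 |>.trans_eq (by ring)
  have hkeyZ : 2 * (X * Y) < a * b + (1 - a) * (1 - b) := by nlinarith [hSP, hZ0, h9, hS0]
  have hq1 : (X + Y) ^ 2 < 1 := by nlinarith [hX2, hY2, hkeyZ]
  have hkey := keyIntegral hp hpq hq1
  have hsq1 : Real.sqrt ((X - Y) ^ 2 * (X + Y) ^ 2) = b - a := by
    rw [show (X - Y) ^ 2 * (X + Y) ^ 2 = (b - a) ^ 2 by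
      linear_combination (X^2 + b*(1-a) - 2*Y^2) * hX2 + (Y^2 + a*(1-b) - 2*b*(1-a)) * hY2]
    exact Real.sqrt_sq (by linarith)
  have hsq2 : Real.sqrt ((1 - (X - Y) ^ 2) * (1 - (X + Y) ^ 2)) = 1 - a - b := by
    rw [show (1 - (X - Y) ^ 2) * (1 - (X + Y) ^ 2) = (1 - a - b) ^ 2 by
      linear_combination (X^2 + b*(1-a) - 2*Y^2 - 2) * hX2 + (Y^2 + a*(1-b) - 2*b*(1-a) - 2) * hY2]
    exact Real.sqrt_sq (by linarith)
  have h2 : (∫ x in ((X - Y) ^ 2)..((X + Y) ^ 2),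
      Real.sqrt (((X + Y) ^ 2 - x) * (x - (X - Y) ^ 2)) / (x * (1 - x))) = 2 * π * a := by
    rw [hkey, hsq1, hsq2]; ring
  refine ⟨hkey, h2, ?_⟩
  have hd : ∀ x : ℝ, Real.sqrt (((X + Y) ^ 2 - x) * (x - (X - Y) ^ 2)) /
      (2 * π * a * x * (1 - x))
      = (Real.sqrt (((X + Y) ^ 2 - x) * (x - (X - Y) ^ 2)) / (x * (1 - x))) / (2 * π * a) := by
    intro x
    rw [div_div]
    congr 1
    ring
  simp_rw [hd]
  rw [intervalIntegral.integral_div, h2]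
  have : 2 * π * a ≠ 0 := by positivity
  field_simp
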